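/- Let f_166 be the local rule f_166(a,b,c) = (a+1)·b + c. For every integer n ≥ 1, the cyclic-boundary transition function (f_166)_{(n),*} : Q^n → Q^n is bijective if and only if n is odd; that is, CA-166_{*}(n) is reversible iff n ≡ 1 (mod 2). -/
import Mathlib


/-- The state set `Q = {0,1}` as `ZMod 2`. -/
abbrev Q : Type := ZMod 2

/-- A triplet local rule `f : Q³ → Q`. -/
abbrev Rule : Type := Q → Q → Q → Q

/-- A configuration of length `n`. -/
abbrev Config (n : ℕ) : Type := Fin n → Q

/-- The transition sending `x` to the word whose `i`-th letter is
`f (x (i-1)) (x i) (x (i+1))`, where the virtual boundary letters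
`x₀` and `x_{n+1}` are given as `x0` and `xn1`. -/
def caTrans {n : ℕ} (f : Rule) (x0 xn1 : Q) (x : Config n) : Config n :=
  fun i =>
    f (if _h : i.1 = 0 then x0
       else x ⟨i.1 - 1, Nat.lt_of_le_of_lt (Nat.sub_le _ _) i.isLt⟩)
      (x i)
      (if h : i.1 + 1 < n then x ⟨i.1 + 1, h⟩ else xn1)

/-- The first letter `x₁` of a nonempty configuration. -/
def firstCell {n : ℕ} (hn : 0 < n) (x : Config n) : Q := x ⟨0, hn⟩

/-- The last letter `xₙ` of a nonempty configuration. -/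
def lastCell {n : ℕ} (hn : 0 < n) (x : Config n) : Q :=
  x ⟨n - 1, Nat.sub_lt hn Nat.one_pos⟩

/-- Fixed boundary `a-b` : `x₀ = a`, `x_{n+1} = b`. -/
def fixedBC {n : ℕ} (f : Rule) (a b : Q) : Config n → Config n :=
  fun x => caTrans f a b x

/-- Boundary `a-*` : `x₀ = a`, `x_{n+1} = xₙ`. -/
def leftFixedBC {n : ℕ} (hn : 0 < n) (f : Rule) (a : Q) : Config n → Config n :=
  fun x => caTrans f a (lastCell hn x) x

/-- Boundary `*-b` : `x₀ = x₁`, `x_{n+1} = b`. -/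
def rightFixedBC {n : ℕ} (hn : 0 < n) (f : Rule) (b : Q) : Config n → Config n :=
  fun x => caTrans f (firstCell hn x) b x

/-- Free boundary `*-*` : `x₀ = x₁`, `x_{n+1} = xₙ`. -/
def freeBC {n : ℕ} (hn : 0 < n) (f : Rule) : Config n → Config n :=
  fun x => caTrans f (firstCell hn x) (lastCell hn x) x

/-- Cyclic boundary `*` : `x₀ = xₙ`, `x_{n+1} = x₁`. -/
def cyclicBC {n : ℕ} (hn : 0 < n) (f : Rule) : Config n → Config n :=
  fun x => caTrans f (lastCell hn x) (firstCell hn x) x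

/-- Rule 166 : `f(a,b,c) = (a+1)·b + c`. -/
def f166 : Rule := fun a b c => (a + 1) * b + c

-- periodic extension
def per {n : ℕ} (hn : 0 < n) (x : Config n) : ℕ → Q :=
  fun k => x ⟨k % n, Nat.mod_lt k hn⟩

lemma per_add_n {n : ℕ} (hn : 0 < n) (x : Config n) (k : ℕ) :
    per hn x (k + n) = per hn x k := by
  simp [per, Nat.add_mod_right]

lemma per_nmul {n : ℕ} (hn : 0 < n) (x : Config n) (m k : ℕ) :
    per hn x (k + n * m) = per hn x k := by
  induction m with
  | zero => simp
  | succ m ih =>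
    have e : k + n * (m+1) = (k + n * m) + n := by ring
    rw [e, per_add_n, ih]

lemma per_fin {n : ℕ} (hn : 0 < n) (x : Config n) (i : Fin n) :
    per hn x i.1 = x i := by
  simp [per, Nat.mod_eq_of_lt i.isLt]

lemma per_trans {n : ℕ} (hn : 0 < n) (f : Rule) (x : Config n) (k : ℕ) :
    per hn (cyclicBC hn f x) (k+1)
      = f (per hn x k) (per hn x (k+1)) (per hn x (k+2)) := by
  have key : ∀ (A B : ℕ) (hA : A < n) (hB : B < n), A = B → x ⟨A,hA⟩ = x ⟨B,hB⟩ := by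
    rintro A B hA hB rfl; rfl
  have hr : k % n < n := Nat.mod_lt k hn
  have e1 : (k + 1) % n = (k % n + 1) % n := (Nat.mod_add_mod k n 1).symm
  have e2 : (k + 2) % n = (k % n + 2) % n := (Nat.mod_add_mod k n 2).symm
  rcases Nat.lt_or_ge (k % n + 1) n with h | h
  · have h1 : (k + 1) % n = k % n + 1 := by rw [e1, Nat.mod_eq_of_lt h]
    rcases Nat.lt_or_ge (k % n + 2) n with h' | h'
    · have h2 : (k + 2) % n = k % n + 2 := by rw [e2, Nat.mod_eq_of_lt h']
      simp only [per, cyclicBC, caTrans, lastCell, firstCell, h1, h2]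
      rw [dif_neg (by omega), dif_pos (by omega)]
      exact congrArg₂ (fun u v => f u (x ⟨(k%n+1), by omega⟩) v)
        (key _ _ _ _ (by omega)) (key _ _ _ _ (by omega))
    · have hs : k % n + 2 = n := by omega
      have h2 : (k + 2) % n = 0 := by rw [e2, hs, Nat.mod_self]
      simp only [per, cyclicBC, caTrans, lastCell, firstCell, h1, h2]
      rw [dif_neg (by omega), dif_neg (by omega)]
      exact congrArg₂ (fun u v => f u (x ⟨(k%n+1), by omega⟩) v)
        (key _ _ _ _ (by omega)) (key _ _ _ _ (by omega))
  · have hs : k % n + 1 = n := by omega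
    have h1 : (k + 1) % n = 0 := by rw [e1, hs, Nat.mod_self]
    rcases Nat.lt_or_ge 1 n with hbig | hone
    · have h2 : (k + 2) % n = 1 := by
        rw [e2, show k % n + 2 = n + 1 by omega, Nat.add_mod_left, Nat.mod_eq_of_lt hbig]
      simp only [per, cyclicBC, caTrans, lastCell, firstCell, h1, h2, dite_true]
      rw [dif_pos (by omega)]
      exact congrArg₂ (fun u v => f u (x ⟨0, by omega⟩) v)
        (key _ _ _ _ (by omega)) (key _ _ _ _ (by omega))
    · have hn1 : n = 1 := by omega
      have h2 : (k + 2) % n = 0 := by rw [hn1, Nat.mod_one]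
      simp only [per, cyclicBC, caTrans, lastCell, firstCell, h1, h2, dite_true]
      rw [dif_neg (by omega)]
      exact congrArg₂ (fun u v => f u (x ⟨0, by omega⟩) v)
        (key _ _ _ _ (by omega)) (key _ _ _ _ (by omega))

lemma step00 : ∀ a0 a1 a2 b0 b1 b2 : Q,
    (a0+1)*a1+a2 = (b0+1)*b1+b2 → a0 = b0 → a1 = b1 → a2 = b2 := by decide

lemma stepAll : ∀ a0 a1 a2 b0 b1 b2 : Q,
    (a0+1)*a1+a2 = (b0+1)*b1+b2 → a0 ≠ b0 → a1 ≠ b1 → a2 ≠ b2 → a1 = a0 + 1 := by decide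

lemma stepB1 : ∀ a0 a1 a2 b0 b1 b2 : Q,
    (a0+1)*a1+a2 = (b0+1)*b1+b2 → a0 ≠ b0 → a1 = b1 → a2 ≠ b2 → a1 = 1 := by decide

lemma stepB2 : ∀ a1 a2 a3 b1 b2 b3 : Q,
    (a1+1)*a2+a3 = (b1+1)*b2+b3 → a1 = b1 → a1 = 1 → a2 ≠ b2 → a3 = b3 := by decide

lemma inj_odd {n : ℕ} (hn : 1 ≤ n) (hodd : n % 2 = 1) :
    Function.Injective (cyclicBC hn f166) := by
  intro x y hxy
  set a := per hn x with ha_def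
  set b := per hn y with hb_def
  have rel : ∀ k, (a k + 1) * a (k+1) + a (k+2) = (b k + 1) * b (k+1) + b (k+2) := by
    intro k
    have h1 := congrArg (fun z => per hn z (k+1)) hxy
    simp only [per_trans hn f166 x k, per_trans hn f166 y k] at h1
    simpa [f166] using h1
  have pa : ∀ m k, a (k + n * m) = a k := fun m k => per_nmul hn x m k
  have pb : ∀ m k, b (k + n * m) = b k := fun m k => per_nmul hn y m k
  suffices hk : ∀ k, a k = b k by
    funext i
    have := hk i.1
    rwa [ha_def, hb_def, per_fin, per_fin] at this
  by_cases hA : ∃ k0, a k0 = b k0 ∧ a (k0+1) = b (k0+1)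
  · obtain ⟨k0, h0, h1⟩ := hA
    have prop : ∀ j, a (k0+j) = b (k0+j) ∧ a (k0+j+1) = b (k0+j+1) := by
      intro j
      induction j with
      | zero => exact ⟨h0, h1⟩
      | succ j ih =>
        refine ⟨ih.2, ?_⟩
        exact step00 _ _ _ _ _ _ (rel (k0+j)) ih.1 ih.2
    intro k
    have e : k0 + (k + n*k0 - k0) = k + n*k0 := by
      have : k0 ≤ n*k0 := Nat.le_mul_of_pos_left _ hn
      omega
    have h2 := (prop (k + n*k0 - k0)).1
    rw [e] at h2
    rwa [pa k0 k, pb k0 k] at h2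
  · push_neg at hA
    by_cases hB2 : ∀ k, a k ≠ b k
    · exfalso
      have hstep : ∀ k, a (k+1) = a k + 1 :=
        fun k => stepAll _ _ _ _ _ _ (rel k) (hB2 k) (hB2 (k+1)) (hB2 (k+2))
      have hlin : ∀ k, a k = a 0 + (k : Q) := by
        intro k
        induction k with
        | zero => simp
        | succ k ih => rw [hstep k, ih]; push_cast; ring
      have hper : a n = a 0 := by
        have := pa 1 0
        simpa using this
      have hcast : (n : Q) = 1 := by
        have : ((n % 2 : ℕ) : Q) = (n : Q) := ZMod.natCast_mod n 2  -- may need adjusting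
        rw [← this, hodd]; norm_num
      have : a 0 + 1 = a 0 := by
        rw [← hcast, ← hlin n, hper]
      simpa using this
    · push_neg at hB2
      obtain ⟨j, hj⟩ := hB2
      exfalso
      set p := j + (n - 1) with hp
      have hEp1 : a (p+1) = b (p+1) := by
        have e : p + 1 = j + n * 1 := by omega
        rw [e, pa, pb]; exact hj
      have hNp : a p ≠ b p := fun h => hA p h hEp1
      have hNp2 : a (p+2) ≠ b (p+2) := fun h => hA (p+1) hEp1 h
      have prop : ∀ t, a (p+2*t) ≠ b (p+2*t) ∧ a (p+2*t+1) = b (p+2*t+1)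
          ∧ a (p+2*t+2) ≠ b (p+2*t+2) := by
        intro t
        induction t with
        | zero => exact ⟨hNp, hEp1, hNp2⟩
        | succ t ih =>
          obtain ⟨h1, h2, h3⟩ := ih
          have hE3 : a (p+2*t+3) = b (p+2*t+3) :=
            stepB2 _ _ _ _ _ _ (rel (p+2*t+1)) h2
              (stepB1 _ _ _ _ _ _ (rel (p+2*t)) h1 h2 h3) h3
          have hN4 : a (p+2*t+4) ≠ b (p+2*t+4) := fun h => hA (p+2*t+3) hE3 h
          have e1 : p+2*(t+1) = p+2*t+2 := by ring
          have e2 : p+2*(t+1)+1 = p+2*t+3 := by ring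
          have e3 : p+2*(t+1)+2 = p+2*t+4 := by ring
          refine ⟨?_, ?_, ?_⟩
          · rw [e1]; exact h3
          · rw [e2]; exact hE3
          · rw [e3]; exact hN4
      have hsq : n * n % 2 = 1 := by
        rw [Nat.mul_mod, hodd]
      have e : p + 2*((n*n-1)/2) + 1 = p + n*n := by omega
      have hfin := (prop ((n*n-1)/2)).2.1
      rw [e, pa n p, pb n p] at hfin
      exact hNp hfin

lemma not_inj_even {n : ℕ} (hn : 1 ≤ n) (he : n % 2 = 0) :
    ¬ Function.Injective (cyclicBC hn f166) := by
  intro hinj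
  have hn0 : 0 < n := hn
  set x : Config n := fun i => (i.1 : Q) with hx
  set y : Config n := fun i => (i.1 : Q) + 1 with hy
  have hcast : ∀ A B : ℕ, A % 2 = B % 2 → (A : Q) = (B : Q) := by
    intro A B h
    rw [← ZMod.natCast_mod A 2, ← ZMod.natCast_mod B 2, h]
  have hdvd : 2 ∣ n := Nat.dvd_of_mod_eq_zero he
  have hpx : ∀ k, per hn0 x k = (k : Q) := by
    intro k
    simp only [per, hx]
    exact hcast _ _ (by rw [Nat.mod_mod_of_dvd _ hdvd])
  have hpy : ∀ k, per hn0 y k = (k : Q) + 1 := by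
    intro k
    simp only [per, hy]
    rw [hcast (k % n) k (by rw [Nat.mod_mod_of_dvd _ hdvd])]
  have key : ∀ (z : Config n) (i : Fin n),
      cyclicBC hn0 f166 z i
        = f166 (per hn0 z (i.1+(n-1))) (per hn0 z (i.1+(n-1)+1)) (per hn0 z (i.1+(n-1)+2)) := by
    intro z i
    have h2 : per hn0 (cyclicBC hn0 f166 z) (i.1+(n-1)+1) = cyclicBC hn0 f166 z i := by
      have e : i.1+(n-1)+1 = i.1 + n * 1 := by omega
      rw [e, per_nmul, per_fin]
    rw [← h2, per_trans]
  have hFx : ∀ i : Fin n, cyclicBC hn0 f166 x i = 1 := by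
    intro i
    rw [key x i, hpx, hpx, hpx]
    have c1 : ((i.1+(n-1) : ℕ) : Q) = (i.1 : Q) + 1 := by
      have : ((i.1+(n-1) : ℕ) : Q) = ((i.1+1 : ℕ) : Q) := hcast _ _ (by omega)
      rw [this]; push_cast; ring
    have c2 : ((i.1+(n-1)+1 : ℕ) : Q) = (i.1 : Q) := hcast _ _ (by omega)
    have c3 : ((i.1+(n-1)+2 : ℕ) : Q) = (i.1 : Q) + 1 := by
      have : ((i.1+(n-1)+2 : ℕ) : Q) = ((i.1+1 : ℕ) : Q) := hcast _ _ (by omega)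
      rw [this]; push_cast; ring
    rw [c1, c2, c3]
    generalize (i.1 : Q) = c
    revert c; decide
  have hFy : ∀ i : Fin n, cyclicBC hn0 f166 y i = 1 := by
    intro i
    rw [key y i, hpy, hpy, hpy]
    have c1 : ((i.1+(n-1) : ℕ) : Q) = (i.1 : Q) + 1 := by
      have : ((i.1+(n-1) : ℕ) : Q) = ((i.1+1 : ℕ) : Q) := hcast _ _ (by omega)
      rw [this]; push_cast; ring
    have c2 : ((i.1+(n-1)+1 : ℕ) : Q) = (i.1 : Q) := hcast _ _ (by omega)
    have c3 : ((i.1+(n-1)+2 : ℕ) : Q) = (i.1 : Q) + 1 := by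
      have : ((i.1+(n-1)+2 : ℕ) : Q) = ((i.1+1 : ℕ) : Q) := hcast _ _ (by omega)
      rw [this]; push_cast; ring
    rw [c1, c2, c3]
    generalize (i.1 : Q) = c
    revert c; decide
  have hxy : x = y := by
    apply hinj
    funext i
    rw [hFx i, hFy i]
  have h0 : x ⟨0, hn0⟩ = y ⟨0, hn0⟩ := by rw [hxy]
  simp only [hx, hy] at h0
  norm_num at h0

theorem statement19 (n : ℕ) (hn : 1 ≤ n) :
    Function.Bijective (cyclicBC hn f166) ↔ n % 2 = 1 := by
  constructor
  · intro hbij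
    by_contra hne
    exact not_inj_even hn (by omega) hbij.injective
  · intro hodd
    exact Finite.injective_iff_bijective.mp (inj_odd hn hodd)
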